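/- Let n ≥ 2 and k ≥ 1. A quaternary code C ⊆ F₄ⁿ is a Hermitian LCD [n, k] code whose Hermitian dual C^{⊥h} has minimum weight 1 if and only if C is equivalent to the code D* = {(x, 0) : x ∈ D} ⊆ F₄ⁿ for some Hermitian LCD [n−1, k] code D ⊆ F₄^{n−1}. -/

import Mathlib

open Finset

/-- The finite field with four elements. -/
abbrev F4 : Type := GaloisField 2 2

noncomputable instance : Fintype F4 := Fintype.ofFinite F4

lemma F4.card_eq : Fintype.card F4 = 4 := by
  simpa using GaloisField.card 2 2 (by norm_num)

lemma F4.exists_omega : ∃ x : F4, x ^ 2 + x + 1 = 0 := by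
  classical
  obtain ⟨x, hx0, hx1⟩ : ∃ x : F4, x ≠ 0 ∧ x ≠ 1 := by
    by_contra h
    push_neg at h
    have hsub : (Finset.univ : Finset F4) ⊆ {0, 1} := by
      intro x _
      rcases eq_or_ne x 0 with h0 | h0
      · simp [h0]
      · simp [h x h0]
    have h1 := Finset.card_le_card hsub
    have h2 : ({0, 1} : Finset F4).card ≤ 2 := (Finset.card_insert_le _ _).trans (by simp)
    have h3 : (Finset.univ : Finset F4).card = 4 := F4.card_eq
    omega
  refine ⟨x, ?_⟩
  have hx : x ^ Fintype.card F4 = x := FiniteField.pow_card x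
  rw [F4.card_eq] at hx
  have hmul : x * (x - 1) * (x ^ 2 + x + 1) = 0 := by
    have : x * (x - 1) * (x ^ 2 + x + 1) = x ^ 4 - x := by ring
    rw [this, hx, sub_self]
  rcases mul_eq_zero.mp hmul with h | h
  · rcases mul_eq_zero.mp h with h | h
    · exact absurd h hx0
    · exact absurd (sub_eq_zero.mp h) hx1
  · exact h

/-- A fixed root of `X² + X + 1` in `F₄`. -/
noncomputable def ω4 : F4 := Classical.choose F4.exists_omega

lemma ω4_spec : ω4 ^ 2 + ω4 + 1 = 0 := Classical.choose_spec F4.exists_omega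

open scoped Classical in
/-- Hamming weight of a vector. -/
noncomputable def wt {n : ℕ} (x : Fin n → F4) : ℕ :=
  (Finset.univ.filter fun i => x i ≠ 0).card

/-- `C` is a code with minimum (nonzero) weight `d`. -/
noncomputable def hasMinWeight {n : ℕ} (C : Submodule F4 (Fin n → F4)) (d : ℕ) : Prop :=
  (∀ x ∈ C, x ≠ 0 → d ≤ wt x) ∧ ∃ x ∈ C, x ≠ 0 ∧ wt x = d

/-- The Hermitian inner product on `F₄ⁿ`; the conjugate of `x` is `x²`. -/
noncomputable def hermInner {n : ℕ} (u v : Fin n → F4) : F4 := ∑ i, u i * (v i) ^ 2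

/-- The Hermitian dual code. -/
noncomputable def hermDual {n : ℕ} (C : Submodule F4 (Fin n → F4)) : Submodule F4 (Fin n → F4) where
  carrier := {x | ∀ y ∈ C, hermInner x y = 0}
  zero_mem' := by intro y hy; simp [hermInner]
  add_mem' := by
    intro a b ha hb y hy
    have := ha y hy
    have := hb y hy
    simp only [hermInner, Pi.add_apply, add_mul, Finset.sum_add_distrib] at *
    simp [*]
  smul_mem' := by
    intro c a ha y hy
    have h := ha y hy
    simp only [hermInner, Pi.smul_apply, smul_eq_mul, mul_assoc, ← Finset.mul_sum] at *
    simp [h]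

/-- `C` is a Hermitian linear complementary dual code. -/
noncomputable def IsHermLCD {n : ℕ} (C : Submodule F4 (Fin n → F4)) : Prop :=
  C ⊓ hermDual C = ⊥

/-- The monomial linear map given by a permutation of coordinates followed by a
multiplication of each coordinate by a scalar. -/
noncomputable def monoMap {n : ℕ} (σ : Equiv.Perm (Fin n)) (s : Fin n → F4) :
    (Fin n → F4) →ₗ[F4] (Fin n → F4) where
  toFun x := fun i => s i * x (σ i)
  map_add' a b := by funext i; simp [mul_add]
  map_smul' c a := by funext i; simp [smul_eq_mul]; ring

/-- Two codes are equivalent if one is obtained from the other by a permutation of the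
coordinates and multiplication of coordinates by nonzero scalars. -/
noncomputable def codeEquiv {n : ℕ} (C C' : Submodule F4 (Fin n → F4)) : Prop :=
  ∃ (σ : Equiv.Perm (Fin n)) (s : Fin n → F4),
    (∀ i, s i ≠ 0) ∧ Submodule.map (monoMap σ s) C = C'

/-- First row of the generator matrix `G(a₁, a₂, a₃, a₄, a₅)`. -/
noncomputable def row1 (n a₁ : ℕ) : Fin n → F4 := fun i =>
  if i.val = 0 then 1
  else if i.val < 2 + a₁ then 0
  else 1

/-- Second row of the generator matrix `G(a₁, a₂, a₃, a₄, a₅)`. -/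
noncomputable def row2 (n a₁ a₂ a₃ a₄ : ℕ) : Fin n → F4 := fun i =>
  if i.val = 0 then 0
  else if i.val < 2 + a₁ then 1
  else if i.val < 2 + a₁ + a₂ then 0
  else if i.val < 2 + a₁ + a₂ + a₃ then 1
  else if i.val < 2 + a₁ + a₂ + a₃ + a₄ then ω4
  else ω4 ^ 2

set_option linter.unusedVariables false in
/-- The code `C(a₁, a₂, a₃, a₄, a₅)`, of length `n = 2 + a₁ + a₂ + a₃ + a₄ + a₅`:
the span of the rows of the generator matrix `G(a₁, a₂, a₃, a₄, a₅)` whose columns are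
`(1,0)ᵀ`, `(0,1)ᵀ`, `a₁` columns `(0,1)ᵀ`, `a₂` columns `(1,0)ᵀ`, `a₃` columns `(1,1)ᵀ`,
`a₄` columns `(1,ω)ᵀ` and `a₅` columns `(1,ω²)ᵀ`. -/
noncomputable def Ccode (n a₁ a₂ a₃ a₄ a₅ : ℕ) : Submodule F4 (Fin n → F4) :=
  Submodule.span F4 {row1 n a₁, row2 n a₁ a₂ a₃ a₄}

/-- The largest minimum weight among Hermitian LCD `[n,2]` codes. -/
def optimalDist (n : ℕ) : ℕ :=
  if n % 5 = 1 ∨ n % 5 = 2 ∨ n % 5 = 3 then 4 * n / 5 else 4 * n / 5 - 1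

/-- `C` is an optimal Hermitian LCD `[n, 2, d]` code. -/
noncomputable def IsOptimalLCD (n d : ℕ) (C : Submodule F4 (Fin n → F4)) : Prop :=
  Module.finrank F4 C = 2 ∧ hasMinWeight C d ∧ IsHermLCD C ∧ d = optimalDist n

/-- The linear map appending a zero coordinate: `x ↦ (x, 0)`. -/
noncomputable def extendZero (m : ℕ) : (Fin m → F4) →ₗ[F4] (Fin (m + 1) → F4) where
  toFun x := Fin.snoc x 0
  map_add' a b := by
    funext i
    refine Fin.lastCases ?_ ?_ i <;> simp
  map_smul' c a := by
    funext i
    refine Fin.lastCases ?_ ?_ i <;> simp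

lemma cube_one {a : F4} (ha : a ≠ 0) : a ^ 3 = 1 := by
  have := FiniteField.pow_card_sub_one_eq_one a ha
  rwa [F4.card_eq] at this

lemma one_le_wt {n : ℕ} {x : Fin n → F4} (hx : x ≠ 0) : 1 ≤ wt x := by
  classical
  obtain ⟨i, hi⟩ := Function.ne_iff.mp hx
  have : i ∈ Finset.univ.filter fun i => x i ≠ 0 := by simpa using hi
  simpa [wt] using Finset.card_pos.mpr ⟨i, this⟩

lemma wt_monoMap {n : ℕ} (σ : Equiv.Perm (Fin n)) {s : Fin n → F4} (hs : ∀ i, s i ≠ 0)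
    (x : Fin n → F4) : wt (monoMap σ s x) = wt x := by
  classical
  unfold wt
  refine Finset.card_bij' (fun i _ => σ i) (fun j _ => σ.symm j) ?_ ?_ ?_ ?_
  · intro i hi
    simp only [Finset.mem_filter, Finset.mem_univ, true_and, monoMap, LinearMap.coe_mk,
      AddHom.coe_mk] at hi ⊢
    exact fun h => (Finset.mem_filter_univ _).mp hi (by simp [h])
  · intro j hj
    simp only [Finset.mem_filter, Finset.mem_univ, true_and, monoMap, LinearMap.coe_mk,
      AddHom.coe_mk, Equiv.apply_symm_apply] at hj ⊢
    exact (Finset.mem_filter_univ _).mpr (mul_ne_zero (hs _) (by rwa [Equiv.apply_symm_apply]))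
  · intro i _; simp
  · intro j _; simp

lemma hermInner_monoMap {n : ℕ} (σ : Equiv.Perm (Fin n)) {s : Fin n → F4} (hs : ∀ i, s i ≠ 0)
    (x y : Fin n → F4) : hermInner (monoMap σ s x) (monoMap σ s y) = hermInner x y := by
  classical
  unfold hermInner monoMap
  simp only [LinearMap.coe_mk, AddHom.coe_mk]
  rw [← Equiv.sum_comp σ (fun i => x i * (y i) ^ 2)]
  refine Finset.sum_congr rfl fun i _ => ?_
  have h3 : s i ^ 3 = 1 := cube_one (hs i)
  have : s i * x (σ i) * (s i * y (σ i)) ^ 2 = s i ^ 3 * (x (σ i) * y (σ i) ^ 2) := by ring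
  rw [this, h3, one_mul]

lemma monoMap_injective {n : ℕ} (σ : Equiv.Perm (Fin n)) {s : Fin n → F4} (hs : ∀ i, s i ≠ 0) :
    Function.Injective (monoMap σ s) := by
  intro a b h
  funext j
  have := congrFun h (σ.symm j)
  simp only [monoMap, LinearMap.coe_mk, AddHom.coe_mk, Equiv.apply_symm_apply] at this
  exact mul_left_cancel₀ (hs _) this

lemma monoMap_surjective {n : ℕ} (σ : Equiv.Perm (Fin n)) {s : Fin n → F4} (hs : ∀ i, s i ≠ 0) :
    Function.Surjective (monoMap σ s) := by
  intro y
  refine ⟨fun j => (s (σ.symm j))⁻¹ * y (σ.symm j), ?_⟩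
  funext i
  simp only [monoMap, LinearMap.coe_mk, AddHom.coe_mk, Equiv.symm_apply_apply]
  rw [← mul_assoc, mul_inv_cancel₀ (hs i), one_mul]

lemma mem_hermDual {n : ℕ} {C : Submodule F4 (Fin n → F4)} {x : Fin n → F4} :
    x ∈ hermDual C ↔ ∀ y ∈ C, hermInner x y = 0 := Iff.rfl

lemma hermDual_map_monoMap {n : ℕ} (σ : Equiv.Perm (Fin n)) {s : Fin n → F4}
    (hs : ∀ i, s i ≠ 0) (C : Submodule F4 (Fin n → F4)) :
    hermDual (Submodule.map (monoMap σ s) C) = Submodule.map (monoMap σ s) (hermDual C) := by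
  ext x
  constructor
  · intro hx
    obtain ⟨z, rfl⟩ := monoMap_surjective σ hs x
    refine ⟨z, fun y hy => ?_, rfl⟩
    have := hx (monoMap σ s y) ⟨y, hy, rfl⟩
    rwa [hermInner_monoMap σ hs] at this
  · rintro ⟨z, hz, rfl⟩ y ⟨w, hw, rfl⟩
    rw [hermInner_monoMap σ hs]
    exact hz w hw

lemma finrank_map_monoMap {n : ℕ} (σ : Equiv.Perm (Fin n)) {s : Fin n → F4}
    (hs : ∀ i, s i ≠ 0) (C : Submodule F4 (Fin n → F4)) :
    Module.finrank F4 (Submodule.map (monoMap σ s) C) = Module.finrank F4 C :=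
  (LinearEquiv.finrank_eq (Submodule.equivMapOfInjective _ (monoMap_injective σ hs) C)).symm

noncomputable def dropLast (m : ℕ) : (Fin (m + 1) → F4) →ₗ[F4] (Fin m → F4) where
  toFun x := Fin.init x
  map_add' a b := by funext i; simp [Fin.init]
  map_smul' c a := by funext i; simp [Fin.init]

lemma hermInner_snoc {m : ℕ} (x : Fin m → F4) (c : F4) (y : Fin (m + 1) → F4) :
    hermInner (Fin.snoc x c) y = hermInner x (Fin.init y) + c * (y (Fin.last m)) ^ 2 := by
  unfold hermInner
  rw [Fin.sum_univ_castSucc]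
  simp [Fin.init]

lemma extendZero_injective (m : ℕ) : Function.Injective (extendZero m) := by
  intro a b h
  funext i
  have := congrFun h (Fin.castSucc i)
  simpa [extendZero] using this

lemma isHermLCD_iff {n : ℕ} {C : Submodule F4 (Fin n → F4)} :
    IsHermLCD C ↔ ∀ x ∈ C, x ∈ hermDual C → x = 0 := by
  unfold IsHermLCD
  rw [Submodule.eq_bot_iff]
  constructor
  · intro h x hx hx'; exact h x ⟨hx, hx'⟩
  · rintro h x ⟨hx, hx'⟩; exact h x hx hx'

lemma isHermLCD_map_monoMap {n : ℕ} (σ : Equiv.Perm (Fin n)) {s : Fin n → F4}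
    (hs : ∀ i, s i ≠ 0) (C : Submodule F4 (Fin n → F4)) :
    IsHermLCD (Submodule.map (monoMap σ s) C) ↔ IsHermLCD C := by
  rw [isHermLCD_iff, isHermLCD_iff]
  constructor
  · intro h x hx hx'
    have := h (monoMap σ s x) ⟨x, hx, rfl⟩ (by
      rw [hermDual_map_monoMap σ hs]; exact ⟨x, hx', rfl⟩)
    exact monoMap_injective σ hs (by simpa using this)
  · intro h x hx hx'
    obtain ⟨z, hz, rfl⟩ := hx
    rw [hermDual_map_monoMap σ hs] at hx'
    obtain ⟨w, hw, hwz⟩ := hx'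
    have : w = z := monoMap_injective σ hs hwz
    subst this
    rw [h w hz hw]; simp

lemma map_extendZero_dropLast {m : ℕ} (C' : Submodule F4 (Fin (m + 1) → F4))
    (h0 : ∀ y ∈ C', y (Fin.last m) = 0) :
    Submodule.map (extendZero m) (Submodule.map (dropLast m) C') = C' := by
  ext x
  constructor
  · rintro ⟨z, ⟨y, hy, rfl⟩, rfl⟩
    have : (extendZero m) ((dropLast m) y) = y := by
      funext i
      refine Fin.lastCases ?_ ?_ i
      · simp [extendZero, dropLast, h0 y hy]
      · intro i; simp [extendZero, dropLast, Fin.init]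
    rw [this]; exact hy
  · intro hx
    refine ⟨dropLast m x, ⟨x, hx, rfl⟩, ?_⟩
    funext i
    refine Fin.lastCases ?_ ?_ i
    · simp [extendZero, dropLast, h0 x hx]
    · intro i; simp [extendZero, dropLast, Fin.init]

noncomputable def eLast (m : ℕ) : Fin (m + 1) → F4 := Fin.snoc 0 1

lemma eLast_ne_zero (m : ℕ) : eLast m ≠ 0 := by
  intro h
  have := congrFun h (Fin.last m)
  simp [eLast] at this

lemma wt_eLast (m : ℕ) : wt (eLast m) = 1 := by
  classical
  unfold wt
  convert Finset.card_singleton (Fin.last m)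
  ext i
  simp only [Finset.mem_filter, Finset.mem_univ, true_and, Finset.mem_singleton]
  refine Fin.lastCases ?_ ?_ i
  · simp [eLast]
  · intro i; simp [eLast, Fin.ne_last_of_lt (Fin.castSucc_lt_last i)]

lemma eLast_mem_hermDual_star {m : ℕ} (D : Submodule F4 (Fin m → F4)) :
    eLast m ∈ hermDual (Submodule.map (extendZero m) D) := by
  rintro y ⟨d, hd, rfl⟩
  rw [eLast, hermInner_snoc]
  have h1 : hermInner (0 : Fin m → F4) (Fin.init ((extendZero m) d)) = 0 := by
    simp [hermInner]
  rw [h1]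
  simp [extendZero]

lemma star_isHermLCD {m : ℕ} {D : Submodule F4 (Fin m → F4)} (hD : IsHermLCD D) :
    IsHermLCD (Submodule.map (extendZero m) D) := by
  rw [isHermLCD_iff] at hD ⊢
  rintro x ⟨d, hd, rfl⟩ hx'
  have hdd : d ∈ hermDual D := by
    intro y hy
    have := hx' ((extendZero m) y) ⟨y, hy, rfl⟩
    have he : (extendZero m) d = Fin.snoc d 0 := rfl
    rw [he, hermInner_snoc] at this
    have hi : Fin.init ((extendZero m) y) = y := by
      funext i; simp [extendZero, Fin.init]
    rw [hi] at this
    simpa using this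
  rw [hD d hd hdd]; simp

lemma finrank_map_inj {M N : Type*} [AddCommGroup M] [Module F4 M] [AddCommGroup N]
    [Module F4 N] (f : M →ₗ[F4] N) (hf : Function.Injective f) (p : Submodule F4 M) :
    Module.finrank F4 (Submodule.map f p) = Module.finrank F4 p :=
  (LinearEquiv.finrank_eq (Submodule.equivMapOfInjective f hf p)).symm

/-- for `n = m + 1 ≥ 2` and `k ≥ 1`, a code `C ⊆ F₄ⁿ` is a Hermitian LCD
`[n, k]` code whose Hermitian dual has minimum weight `1` iff `C` is equivalent to
`D* = {(x, 0) : x ∈ D}` for some Hermitian LCD `[n - 1, k]` code `D`. -/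
theorem stmt8 (m k : ℕ) (hm : 1 ≤ m) (hk : 1 ≤ k)
    (C : Submodule F4 (Fin (m + 1) → F4)) :
    (Module.finrank F4 C = k ∧ IsHermLCD C ∧ hasMinWeight (hermDual C) 1) ↔
      ∃ D : Submodule F4 (Fin m → F4),
        Module.finrank F4 D = k ∧ IsHermLCD D ∧
        codeEquiv C (Submodule.map (extendZero m) D) := by

  classical
  constructor
  · rintro ⟨hrk, hlcd, hlow, z, hzC, hz0, hwz⟩
    -- extract the support index of the weight-one dual vector
    unfold wt at hwz
    obtain ⟨i, hi⟩ := Finset.card_eq_one.mp hwz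
    have hzi : z i ≠ 0 := by
      have : i ∈ Finset.univ.filter fun j => z j ≠ 0 := by
        rw [hi]; exact Finset.mem_singleton_self i
      simpa using this
    have hzj : ∀ j, j ≠ i → z j = 0 := by
      intro j hj
      by_contra h
      have : j ∈ Finset.univ.filter fun j => z j ≠ 0 := by simpa using h
      rw [hi, Finset.mem_singleton] at this
      exact hj this
    have hCi : ∀ y ∈ C, y i = 0 := by
      intro y hy
      have h := hzC y hy
      have hsum : hermInner z y = z i * (y i) ^ 2 :=
        Finset.sum_eq_single i (fun j _ hj => by rw [hzj j hj]; ring) (by simp)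
      rw [hsum] at h
      have := (mul_eq_zero.mp h).resolve_left hzi
      exact pow_eq_zero_iff (two_ne_zero) |>.mp this
    set σ : Equiv.Perm (Fin (m + 1)) := Equiv.swap i (Fin.last m) with hσ
    set s : Fin (m + 1) → F4 := fun _ => 1 with hs'
    have hs : ∀ j, s j ≠ 0 := fun j => one_ne_zero
    set C' := Submodule.map (monoMap σ s) C with hC'
    have h0 : ∀ y ∈ C', y (Fin.last m) = 0 := by
      rintro y ⟨x, hx, rfl⟩
      have : σ (Fin.last m) = i := by simp [hσ, Equiv.swap_apply_right]
      simp only [monoMap, LinearMap.coe_mk, AddHom.coe_mk, this, hs', one_mul]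
      exact hCi x hx
    set D := Submodule.map (dropLast m) C' with hD
    have key : Submodule.map (extendZero m) D = C' := map_extendZero_dropLast C' h0
    refine ⟨D, ?_, ?_, σ, s, hs, key.symm⟩
    · have h1 : Module.finrank F4 (Submodule.map (extendZero m) D) = Module.finrank F4 D :=
        finrank_map_inj _ (extendZero_injective m) D
      rw [key] at h1
      rw [← h1, hC', finrank_map_monoMap σ hs, hrk]
    · rw [isHermLCD_iff]
      intro x hx hx'
      have hxC' : (extendZero m) x ∈ C' := by
        rw [← key]; exact ⟨x, hx, rfl⟩
      have hxd : (extendZero m) x ∈ hermDual C' := by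
        intro y hy
        have he : (extendZero m) x = Fin.snoc x 0 := rfl
        rw [he, hermInner_snoc]
        have : Fin.init y ∈ D := ⟨y, hy, rfl⟩
        rw [hx' _ this]
        simp
      have hC'lcd : IsHermLCD C' := (isHermLCD_map_monoMap σ hs C).mpr hlcd
      rw [isHermLCD_iff] at hC'lcd
      have := hC'lcd _ hxC' hxd
      have h0' : (extendZero m) x = (extendZero m) 0 := by rw [this, map_zero]
      exact extendZero_injective m h0'
  · rintro ⟨D, hrkD, hDlcd, σ, s, hs, hmap⟩
    have hstar : IsHermLCD (Submodule.map (extendZero m) D) := star_isHermLCD hDlcd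
    refine ⟨?_, ?_, ?_, ?_⟩
    · rw [← finrank_map_monoMap σ hs C, hmap,
        finrank_map_inj _ (extendZero_injective m) D, hrkD]
    · rw [← isHermLCD_map_monoMap σ hs C, hmap]
      exact hstar
    · intro x _ hx0; exact one_le_wt hx0
    · have he : eLast m ∈ Submodule.map (monoMap σ s) (hermDual C) := by
        rw [← hermDual_map_monoMap σ hs, hmap]
        exact eLast_mem_hermDual_star D
      obtain ⟨z, hz, hzf⟩ := he
      refine ⟨z, hz, ?_, ?_⟩
      · intro h
        rw [h, map_zero] at hzf
        exact eLast_ne_zero m hzf.symm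
      · rw [← wt_monoMap σ hs z, hzf, wt_eLast]
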